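/- Tutte's theorem on the Tutte matrix: A finite simple undirected graph G on vertex set {1,…,n} has a perfect matching if and only if the determinant of its Tutte matrix T_G is a nonzero polynomial. -/

import Mathlib

open Equiv Equiv.Perm Finset

theorem Equiv.Perm.inv_apply_self {β : Type*} (f : Perm β) (x : β) : f⁻¹ (f x) = x :=
  f.symm_apply_apply x

theorem Equiv.Perm.apply_inv_self {β : Type*} (f : Perm β) (x : β) : f (f⁻¹ x) = x :=
  f.apply_symm_apply x

namespace TutteAux

variable {α : Type*} [DecidableEq α] [Fintype α] [LinearOrder α]

/-- set of points lying on odd cycles of σ -/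
def oddSet (σ : Perm α) : Finset α := univ.filter fun x => Odd (σ.cycleOf x).support.card

/-- reverse the odd cycle containing the least point on an odd cycle -/
def rev (σ : Perm α) : Perm α :=
  if h : (oddSet σ).Nonempty then
    (σ.cycleOf ((oddSet σ).min' h))⁻¹ * (σ.cycleOf ((oddSet σ).min' h))⁻¹ * σ
  else σ

variable {σ : Perm α} (h : (oddSet σ).Nonempty)

theorem x0_mem_support (h : (oddSet σ).Nonempty) : (oddSet σ).min' h ∈ σ.support := by
  set x₀ := (oddSet σ).min' h with hx₀
  have hmem : x₀ ∈ oddSet σ := Finset.min'_mem _ h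
  rw [oddSet, Finset.mem_filter] at hmem
  have hcard := hmem.2
  rcases Finset.card_pos.1 hcard.pos with ⟨y, hy⟩
  exact (Equiv.Perm.mem_support_cycleOf_iff.1 hy).2

theorem cycleOf_inv_apply (x y : α) :
    (σ.cycleOf x)⁻¹ y = if σ.SameCycle x y then σ⁻¹ y else y := by
  rw [Equiv.Perm.cycleOf_inv, Equiv.Perm.cycleOf_apply]
  simp [Equiv.Perm.sameCycle_inv]

theorem rev_apply_of_sameCycle {y : α} (hy : σ.SameCycle ((oddSet σ).min' h) y) :
    rev σ y = σ⁻¹ y := by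
  rw [rev, dif_pos h]
  set x₀ := (oddSet σ).min' h
  simp only [Equiv.Perm.mul_apply]
  have h1 : (σ.cycleOf x₀)⁻¹ (σ y) = y := by
    rw [cycleOf_inv_apply, if_pos (Equiv.Perm.sameCycle_apply_right.2 hy), Perm.inv_apply_self]
  rw [h1, cycleOf_inv_apply, if_pos hy]

theorem rev_apply_of_not_sameCycle {y : α} (hy : ¬ σ.SameCycle ((oddSet σ).min' h) y) :
    rev σ y = σ y := by
  rw [rev, dif_pos h]
  set x₀ := (oddSet σ).min' h
  simp only [Equiv.Perm.mul_apply]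
  have h1 : ¬ σ.SameCycle x₀ (σ y) := fun hc => hy (Equiv.Perm.sameCycle_apply_right.1 hc)
  have h2 : (σ.cycleOf x₀)⁻¹ (σ y) = σ y := by rw [cycleOf_inv_apply, if_neg h1]
  rw [h2, h2]

theorem rev_cases (y : α) : rev σ y = σ y ∨ rev σ y = σ⁻¹ y := by
  by_cases hne : (oddSet σ).Nonempty
  · by_cases hy : σ.SameCycle ((oddSet σ).min' hne) y
    · exact Or.inr (rev_apply_of_sameCycle hne hy)
    · exact Or.inl (rev_apply_of_not_sameCycle hne hy)
  · left; rw [rev, dif_neg hne]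

theorem rev_cases' (y : α) : σ y = rev σ y ∨ σ y = (rev σ)⁻¹ y := by
  by_cases hne : (oddSet σ).Nonempty
  · by_cases hy : σ.SameCycle ((oddSet σ).min' hne) y
    · right
      rw [eq_comm, Equiv.Perm.inv_eq_iff_eq, rev_apply_of_sameCycle hne
        (Equiv.Perm.sameCycle_apply_right.2 hy), Perm.inv_apply_self]
    · exact Or.inl (rev_apply_of_not_sameCycle hne hy).symm
  · left; rw [rev, dif_neg hne]

theorem sameCycle_of_cases {f g : Perm α} (hfg : ∀ y, f y = g y ∨ f y = g⁻¹ y) {a b : α}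
    (hab : f.SameCycle a b) : g.SameCycle a b := by
  obtain ⟨k, rfl⟩ := hab
  have key : ∀ k : ℤ, g.SameCycle a ((f ^ k) a) := by
    intro k
    induction k using Int.induction_on with
    | zero => exact ⟨0, rfl⟩
    | succ k ih =>
        have : (f ^ ((k : ℤ) + 1)) a = f ((f ^ (k : ℤ)) a) := by
          rw [add_comm, zpow_add, zpow_one, Equiv.Perm.mul_apply]
        rw [this]
        rcases hfg ((f ^ (k : ℤ)) a) with h1 | h1 <;> rw [h1]
        · exact ih.trans ⟨1, by simp⟩
        · exact ih.trans ⟨-1, by simp⟩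
    | pred k ih =>
        have : (f ^ ((-k : ℤ) - 1)) a = f⁻¹ ((f ^ (-k : ℤ)) a) := by
          rw [sub_eq_add_neg, add_comm, zpow_add, zpow_neg_one, Equiv.Perm.mul_apply]
        rw [this]
        set z := (f ^ (-k : ℤ)) a with hz
        rcases hfg (f⁻¹ z) with h1 | h1 <;> rw [Perm.apply_inv_self] at h1
        · have h2 : g⁻¹ z = f⁻¹ z := by
            conv_lhs => rw [h1]
            rw [Perm.inv_apply_self]
          rw [← h2]
          exact ih.trans ⟨-1, by simp⟩
        · have h2 : g z = f⁻¹ z := by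
            conv_lhs => rw [h1]
            rw [Perm.apply_inv_self]
          rw [← h2]
          exact ih.trans ⟨1, by simp⟩
  exact key k

theorem sameCycle_rev {a b : α} : (rev σ).SameCycle a b ↔ σ.SameCycle a b :=
  ⟨sameCycle_of_cases (fun y => rev_cases y), sameCycle_of_cases (fun y => rev_cases' y)⟩

theorem support_rev : (rev σ).support = σ.support := by
  ext y
  simp only [Equiv.Perm.mem_support]
  rcases rev_cases (σ := σ) y with h1 | h1 <;> rw [h1]
  constructor
  · intro hy hc
    apply hy
    conv_lhs => rw [← hc]
    rw [Perm.inv_apply_self]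
  · intro hy hc
    apply hy
    conv_lhs => rw [← hc]
    rw [Perm.apply_inv_self]

theorem support_cycleOf_rev (x : α) :
    ((rev σ).cycleOf x).support = (σ.cycleOf x).support := by
  ext y
  rw [Equiv.Perm.mem_support_cycleOf_iff, Equiv.Perm.mem_support_cycleOf_iff, sameCycle_rev,
    support_rev]

theorem oddSet_rev : oddSet (rev σ) = oddSet σ := by
  ext x
  simp only [oddSet, Finset.mem_filter, support_cycleOf_rev]

theorem cycleOf_rev_x0 (h : (oddSet σ).Nonempty) :
    (rev σ).cycleOf ((oddSet σ).min' h) = (σ.cycleOf ((oddSet σ).min' h))⁻¹ := by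
  set x₀ := (oddSet σ).min' h
  apply Equiv.ext
  intro y
  rw [Equiv.Perm.cycleOf_apply, cycleOf_inv_apply]
  by_cases hy : σ.SameCycle x₀ y
  · rw [if_pos (sameCycle_rev.2 hy), if_pos hy, rev_apply_of_sameCycle h hy]
  · rw [if_neg (fun hc => hy (sameCycle_rev.1 hc)), if_neg hy]

theorem rev_rev (h : (oddSet σ).Nonempty) : rev (rev σ) = σ := by
  have h2 : (oddSet (rev σ)).Nonempty := by rw [oddSet_rev]; exact h
  have hx : (oddSet (rev σ)).min' h2 = (oddSet σ).min' h := by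
    congr 1 <;> rw [oddSet_rev]
  rw [rev, dif_pos h2, hx, cycleOf_rev_x0 h]
  conv_lhs => rw [rev, dif_pos h]
  group

theorem sign_rev : Equiv.Perm.sign (rev σ) = Equiv.Perm.sign σ := by
  by_cases h : (oddSet σ).Nonempty
  · rw [rev, dif_pos h]
    simp only [map_mul, Equiv.Perm.sign_inv]
    rw [Int.units_mul_self, one_mul]
  · rw [rev, dif_neg h]

variable {R : Type*} [CommRing R]

theorem prod_rev (h : (oddSet σ).Nonempty) (M : Matrix α α R)
    (hskew : ∀ a b, M a b = - M b a) :
    ∏ i, M ((rev σ) i) i = - ∏ i, M (σ i) i := by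
  set x₀ := (oddSet σ).min' h with hx₀
  set s := (σ.cycleOf x₀).support with hs
  have hodd : Odd s.card :=
    (Finset.mem_filter.1 (Finset.min'_mem _ h)).2
  have hmem_iff : ∀ y, y ∈ s ↔ σ.SameCycle x₀ y := by
    intro y
    rw [hs, Equiv.Perm.mem_support_cycleOf_iff' (Equiv.Perm.mem_support.1 (x0_mem_support h))]
  have hco : ∀ i ∈ sᶜ, M ((rev σ) i) i = M (σ i) i := by
    intro i hi
    rw [rev_apply_of_not_sameCycle h (fun hc => (Finset.mem_compl.1 hi) ((hmem_iff i).2 hc))]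
  have hsplit : ∀ (f : Perm α), ∏ i, M (f i) i = (∏ i ∈ s, M (f i) i) * ∏ i ∈ sᶜ, M (f i) i :=
    fun f => (Finset.prod_mul_prod_compl s _).symm
  rw [hsplit (rev σ), hsplit σ, Finset.prod_congr rfl hco]
  have hin : ∀ i ∈ s, M ((rev σ) i) i = M (σ⁻¹ i) i := by
    intro i hi
    rw [rev_apply_of_sameCycle h ((hmem_iff i).1 hi)]
  rw [Finset.prod_congr rfl hin]
  have hflip : ∏ i ∈ s, M (σ⁻¹ i) i = - ∏ i ∈ s, M (σ i) i := by
    have hstep : ∏ i ∈ s, M (σ⁻¹ i) i = ∏ i ∈ s, M i (σ i) := by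
      apply Finset.prod_bij' (fun a _ => σ⁻¹ a) (fun a _ => σ a)
      · intro a ha
        rw [hmem_iff] at ha ⊢
        exact Equiv.Perm.sameCycle_symm_apply_right.2 ha
      · intro a ha
        rw [hmem_iff] at ha ⊢
        exact Equiv.Perm.sameCycle_apply_right.2 ha
      · intro a _; exact Perm.apply_inv_self σ a
      · intro a _; exact Perm.inv_apply_self σ a
      · intro a _; rw [Perm.apply_inv_self]
    rw [hstep]
    have : ∀ i ∈ s, M i (σ i) = (-1) * M (σ i) i := by
      intro i _; rw [hskew i (σ i)]; ring
    rw [Finset.prod_congr rfl this, Finset.prod_mul_distrib, Finset.prod_const,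
      Odd.neg_one_pow hodd]
    ring
  rw [hflip]
  ring

/-- the cancellation: sum of terms over permutations having an odd cycle vanishes -/
theorem sum_odd_eq_zero (M : Matrix α α R) (hskew : ∀ a b, M a b = - M b a)
    (hR : ∀ x : R, x + x = 0 → x = 0) :
    ∑ σ ∈ univ.filter (fun σ : Perm α => (oddSet σ).Nonempty),
      ((Equiv.Perm.sign σ : ℤ) : R) * ∏ i, M (σ i) i = 0 := by
  refine Finset.sum_involution (fun σ _ => rev σ) ?_ ?_ (fun σ hσ => ?_) (fun σ hσ => ?_)
  · intro σ hσ
    rw [Finset.mem_filter] at hσ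
    rw [sign_rev, prod_rev hσ.2 M hskew]
    ring
  · intro σ hσ hne hc
    rw [Finset.mem_filter] at hσ
    apply hne
    apply hR
    have := prod_rev hσ.2 M hskew
    rw [show rev σ = σ from hc] at this
    calc ((Equiv.Perm.sign σ : ℤ) : R) * ∏ i, M (σ i) i
          + ((Equiv.Perm.sign σ : ℤ) : R) * ∏ i, M (σ i) i
        = ((Equiv.Perm.sign σ : ℤ) : R) * (∏ i, M (σ i) i + ∏ i, M (σ i) i) := by ring
      _ = ((Equiv.Perm.sign σ : ℤ) : R) * (∏ i, M (σ i) i + - ∏ i, M (σ i) i) := by rw [← this]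
      _ = 0 := by ring
  · rw [Finset.mem_filter] at hσ
    rw [Finset.mem_filter]
    exact ⟨Finset.mem_univ _, by rw [oddSet_rev]; exact hσ.2⟩
  · rw [Finset.mem_filter] at hσ
    exact rev_rev hσ.2

theorem matching_of_even_perm {V : Type*} [DecidableEq V] [Fintype V] [LinearOrder V] {G : SimpleGraph V}
    (σ : Perm V) (hadj : ∀ i, G.Adj (σ i) i)
    (hev : ∀ x, ¬ Odd (σ.cycleOf x).support.card) :
    ∃ M : G.Subgraph, M.IsPerfectMatching := by
  classical
  have hne : ∀ x, σ x ≠ x := fun x hc => (G.ne_of_adj (hadj x)) hc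
  have hxmem : ∀ x, x ∈ (σ.cycleOf x).support := fun x =>
    (Equiv.Perm.mem_support_cycleOf_iff' (hne x)).2 (Equiv.Perm.SameCycle.refl σ x)
  set base : V → V := fun x => (σ.cycleOf x).support.min' ⟨x, hxmem x⟩ with hbase_def
  have hbase_sc : ∀ x, σ.SameCycle (base x) x := fun x =>
    ((Equiv.Perm.mem_support_cycleOf_iff' (hne x)).1 (Finset.min'_mem _ _)).symm
  have hbc : ∀ {x y}, σ.SameCycle x y → base x = base y := by
    intro x y hxy
    simp only [hbase_def]
    congr 1
    rw [hxy.cycleOf_eq]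
  have hbase_cyc : ∀ x, σ.cycleOf (base x) = σ.cycleOf x := fun x =>
    (hbase_sc x).cycleOf_eq
  have hexists : ∀ x, ∃ k : ℕ, (σ ^ k) (base x) = x := by
    intro x
    obtain ⟨i, _, hi2⟩ :=
      (hbase_sc x).exists_pow_eq_of_mem_support (Equiv.Perm.mem_support.2 (hne (base x)))
    exact ⟨i, hi2⟩
  set pos : V → ℕ := fun x => Nat.find (hexists x) with hpos_def
  have hpos_spec : ∀ x, (σ ^ pos x) (base x) = x := fun x => Nat.find_spec (hexists x)
  have hpos_lt : ∀ x, pos x < (σ.cycleOf x).support.card := by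
    intro x
    obtain ⟨i, hi, hi2⟩ :=
      (hbase_sc x).exists_pow_eq_of_mem_support (Equiv.Perm.mem_support.2 (hne (base x)))
    rw [hbase_cyc x] at hi
    exact lt_of_le_of_lt (Nat.find_min' (hexists x) hi2) hi
  have hmod : ∀ (x : V) (m k : ℕ),
      (σ ^ m) (base x) = (σ ^ k) (base x) ↔ m ≡ k [MOD (σ.cycleOf x).support.card] := by
    intro x m k
    have h1 := (Equiv.Perm.isCycleOn_support_cycleOf σ (base x)).pow_apply_eq_pow_apply
      (hxmem (base x)) (m := m) (n := k)
    rwa [hbase_cyc x] at h1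
  have hmodeq : ∀ {a b c : ℕ}, a ≡ b [MOD c] → a < c → b < c → a = b := by
    intro a b c hab ha hb
    rw [Nat.ModEq, Nat.mod_eq_of_lt ha, Nat.mod_eq_of_lt hb] at hab
    exact hab
  have hclaim1 : ∀ x, Even (pos x) → pos (σ x) = pos x + 1 := by
    intro x hx
    have hb1 : base (σ x) = base x := (hbc ⟨1, by simp⟩).symm
    have hlt : pos x + 1 < (σ.cycleOf x).support.card := by
      rcases Nat.lt_or_ge (pos x + 1) ((σ.cycleOf x).support.card) with h | h
      · exact h
      · exfalso
        have heq : pos x + 1 = (σ.cycleOf x).support.card :=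
          le_antisymm (hpos_lt x) h
        exact hev x (heq ▸ hx.add_one)
    have hwit : (σ ^ (pos x + 1)) (base (σ x)) = σ x := by
      rw [hb1, pow_succ', Equiv.Perm.mul_apply, hpos_spec x]
    have hle : pos (σ x) ≤ pos x + 1 := Nat.find_min' (hexists (σ x)) hwit
    have hq : (σ ^ pos (σ x)) (base x) = (σ ^ (pos x + 1)) (base x) := by
      rw [← hb1, hpos_spec (σ x), hb1]
      rw [hb1] at hwit
      exact hwit.symm
    have hcyceq : σ.cycleOf (σ x) = σ.cycleOf x := (Equiv.Perm.SameCycle.cycleOf_eq ⟨1, by simp⟩).symm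
    have hq2 := (hmod x _ _).1 hq
    exact hmodeq hq2 (by rw [← hcyceq]; exact hpos_lt (σ x)) hlt
  have hclaim2 : ∀ x, Odd (pos x) → pos (σ⁻¹ x) + 1 = pos x := by
    intro x hx
    have hb1 : base (σ⁻¹ x) = base x := (hbc ⟨-1, by simp⟩).symm
    have hwit : (σ ^ (pos (σ⁻¹ x) + 1)) (base x) = x := by
      rw [← hb1, pow_succ', Equiv.Perm.mul_apply, hpos_spec (σ⁻¹ x), Equiv.Perm.apply_inv_self]
    have hq : (σ ^ pos x) (base x) = (σ ^ (pos (σ⁻¹ x) + 1)) (base x) := by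
      rw [hpos_spec x, hwit]
    have hq2 := (hmod x _ _).1 hq
    have hcyceq : σ.cycleOf (σ⁻¹ x) = σ.cycleOf x := Equiv.Perm.SameCycle.cycleOf_eq ⟨1, by simp⟩
    have hylt : pos (σ⁻¹ x) < (σ.cycleOf x).support.card := by
      rw [← hcyceq]; exact hpos_lt (σ⁻¹ x)
    rcases Nat.lt_or_ge (pos (σ⁻¹ x) + 1) ((σ.cycleOf x).support.card) with h | h
    · exact (hmodeq hq2 (hpos_lt x) h).symm
    · exfalso
      have heq : pos (σ⁻¹ x) + 1 = (σ.cycleOf x).support.card := le_antisymm hylt h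
      rw [heq] at hq2
      have h0 : pos x = 0 := by
        have := hq2
        rw [Nat.ModEq, Nat.mod_self, Nat.mod_eq_of_lt (hpos_lt x)] at this
        exact this
      rw [h0] at hx
      simp at hx
  set m : V → V := fun x => if Even (pos x) then σ x else σ⁻¹ x with hm_def
  have hminv : ∀ x, m (m x) = x := by
    intro x
    by_cases he : Even (pos x)
    · have h1 : m x = σ x := by rw [hm_def]; simp [he]
      have h2 : ¬ Even (pos (σ x)) := by
        rw [hclaim1 x he]
        simp [Nat.even_add_one, he]
      rw [h1, hm_def]
      simp only [h2, if_neg, if_false]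
      exact Equiv.Perm.inv_apply_self σ x
    · have ho : Odd (pos x) := Nat.odd_iff.2 (Nat.not_even_iff.1 he)
      have h1 : m x = σ⁻¹ x := by rw [hm_def]; simp [he]
      have h2 : Even (pos (σ⁻¹ x)) := by
        have := hclaim2 x ho
        rcases Nat.even_or_odd (pos (σ⁻¹ x)) with h | h
        · exact h
        · exfalso
          have : Even (pos (σ⁻¹ x) + 1) := Odd.add_one h
          rw [hclaim2 x ho] at this
          exact (Nat.not_even_iff_odd.2 ho) this
      rw [h1, hm_def]
      simp only [h2, if_pos]
      exact Equiv.Perm.apply_inv_self σ x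
  have hmne : ∀ x, m x ≠ x := by
    intro x
    rw [hm_def]
    dsimp only
    by_cases he : Even (pos x)
    · rw [if_pos he]; exact hne x
    · rw [if_neg he]
      intro hc
      have h2 := congrArg σ hc
      rw [Equiv.Perm.apply_inv_self] at h2
      exact hne x h2.symm
  have hmadj : ∀ x, G.Adj x (m x) := by
    intro x
    rw [hm_def]
    by_cases he : Even (pos x)
    · simpa [he] using (hadj x).symm
    · have h2 := hadj (σ⁻¹ x)
      rw [Equiv.Perm.apply_inv_self] at h2
      simpa [he] using h2
  refine ⟨⟨Set.univ, fun a b => m a = b, ?_, ?_, ?_⟩, ?_, ?_⟩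
  · intro v w h
    rw [← h]
    exact hmadj v
  · intro v w _
    exact Set.mem_univ v
  · refine ⟨fun a b h => ?_⟩
    rw [← h, hminv]
  · intro v _
    exact ⟨m v, rfl, fun w hw => Eq.symm hw⟩
  · intro v
    exact Set.mem_univ v

end TutteAux


/-- Tutte's theorem: a finite simple graph has a perfect matching iff the determinant
of its Tutte matrix is a nonzero polynomial. -/
theorem stmt_16 {n : ℕ} (G : SimpleGraph (Fin n)) [DecidableRel G.Adj]
    (T : Matrix (Fin n) (Fin n) (MvPolynomial (Fin n × Fin n) ℚ))
    (hT : T = Matrix.of fun i j =>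
      if G.Adj i j then
        (if i < j then MvPolynomial.X (i, j) else - MvPolynomial.X (j, i))
      else 0) :
    (∃ M : G.Subgraph, M.IsPerfectMatching) ↔ T.det ≠ 0 := by
  have hTe : ∀ i j, T i j = if G.Adj i j then
      (if i < j then MvPolynomial.X (i, j) else - MvPolynomial.X (j, i)) else 0 := by
    intro i j; rw [hT]; rfl
  constructor
  · rintro ⟨M, hM⟩
    have hpart : ∀ v : Fin n, ∃! w, M.Adj v w := fun v => hM.1 (hM.2 v)
    set f : Fin n → Fin n := fun v => (hpart v).choose with hf
    have hfadj : ∀ v, M.Adj v (f v) := fun v => (hpart v).choose_spec.1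
    have huniq : ∀ v w, M.Adj v w → w = f v := fun v w h => (hpart v).choose_spec.2 w h
    have hff : ∀ v, f (f v) = v := fun v => (huniq (f v) v (hfadj v).symm).symm
    set σ : Equiv.Perm (Fin n) := ⟨f, f, hff, hff⟩ with hσ
    have hGadj : ∀ v, G.Adj v (f v) := fun v => M.adj_sub (hfadj v)
    have hfne : ∀ v, f v ≠ v := fun v => (hGadj v).ne'
    set φ : MvPolynomial (Fin n × Fin n) ℚ →+* ℚ :=
      MvPolynomial.eval (fun p => if f p.1 = p.2 then (1:ℚ) else 0) with hφ
    set c : Fin n → ℚ := fun i => if i < f i then 1 else -1 with hc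
    have hA : φ.mapMatrix T = Matrix.diagonal c * Equiv.Perm.permMatrix ℚ σ := by
      rw [RingHom.mapMatrix_apply]
      ext i j
      rw [Matrix.map_apply, Matrix.diagonal_mul, hTe]
      have hperm : (Equiv.Perm.permMatrix ℚ σ) i j = if σ i = j then 1 else 0 := by
        simp [Equiv.Perm.permMatrix, PEquiv.toMatrix_apply, Equiv.toPEquiv_apply]
      rw [hperm]
      have hσi : σ i = f i := rfl
      rw [hσi]
      by_cases hfij : f i = j
      · subst hfij
        rw [if_pos (hGadj i), if_pos rfl, mul_one]
        by_cases hlt : i < f i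
        · rw [if_pos hlt]
          simp [hφ, hc, hlt, MvPolynomial.eval_X]
        · rw [if_neg hlt]
          simp [hφ, hc, hlt, hff, MvPolynomial.eval_X]
      · rw [if_neg hfij, mul_zero]
        by_cases hadjij : G.Adj i j
        · by_cases hlt : i < j
          · rw [if_pos hadjij, if_pos hlt, hφ]
            simp [MvPolynomial.eval_X, hfij]
          · have hfj : f j ≠ i := fun hcon => hfij (by rw [← hcon, hff])
            rw [if_pos hadjij, if_neg hlt, hφ]
            simp [MvPolynomial.eval_X, hfj]
        · rw [if_neg hadjij, map_zero]
    intro hdet0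
    have h1 : φ T.det = 0 := by rw [hdet0, map_zero]
    rw [RingHom.map_det, hA, Matrix.det_mul, Matrix.det_diagonal,
      Matrix.det_permutation] at h1
    have h2 : (∏ i, c i) ≠ 0 := Finset.prod_ne_zero_iff.2 (fun i _ => by
      rw [hc]; dsimp only; split <;> norm_num)
    have h3 : ((Equiv.Perm.sign σ : ℤ) : ℚ) ≠ 0 := by
      rcases Int.units_eq_one_or (Equiv.Perm.sign σ) with h | h <;> rw [h] <;> norm_num
    rcases mul_eq_zero.1 h1 with h | h
    exacts [h2 h, h3 h]
  · intro hdet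
    have hskew : ∀ a b, T a b = - T b a := by
      intro a b
      rw [hTe, hTe]
      by_cases hab : G.Adj a b
      · have hba : G.Adj b a := hab.symm
        rcases lt_trichotomy a b with h | h | h
        · rw [if_pos hab, if_pos hba, if_pos h, if_neg (asymm h), neg_neg]
        · subst h
          exact absurd rfl (G.ne_of_adj hab)
        · rw [if_pos hab, if_pos hba, if_neg (asymm h), if_pos h]
      · have hba : ¬ G.Adj b a := fun hcon => hab hcon.symm
        rw [if_neg hab, if_neg hba, neg_zero]
    rw [Matrix.det_apply'] at hdet
    rw [← Finset.sum_filter_add_sum_filter_not Finset.univ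
      (fun σ : Equiv.Perm (Fin n) => (TutteAux.oddSet σ).Nonempty)] at hdet
    have hRtor : ∀ x : MvPolynomial (Fin n × Fin n) ℚ, x + x = 0 → x = 0 := by
      intro x hx
      have h2 : (2:MvPolynomial (Fin n × Fin n) ℚ) * x = 0 := by linear_combination hx
      rcases mul_eq_zero.1 h2 with h3 | h3
      · exact absurd h3 two_ne_zero
      · exact h3
    rw [TutteAux.sum_odd_eq_zero T hskew hRtor, zero_add] at hdet
    obtain ⟨σ, hσmem, hσne⟩ := Finset.exists_ne_zero_of_sum_ne_zero hdet
    rw [Finset.mem_filter] at hσmem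
    have hprod : ∀ i, T (σ i) i ≠ 0 := by
      intro i hzero
      exact hσne (mul_eq_zero_of_right _ (Finset.prod_eq_zero (Finset.mem_univ i) hzero))
    have hadj : ∀ i, G.Adj (σ i) i := by
      intro i
      by_contra hcon
      exact hprod i (by rw [hTe, if_neg hcon])
    have hev : ∀ x, ¬ Odd (σ.cycleOf x).support.card := by
      intro x hx
      exact hσmem.2 ⟨x, Finset.mem_filter.2 ⟨Finset.mem_univ x, hx⟩⟩
    exact TutteAux.matching_of_even_perm σ hadj hev
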